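/- Let n and m be positive even integers and set k = n/2, l = m/2. Let θ : 𝔽_{2^k} → 𝔽₂ and ϑ : 𝔽_{2^l} → 𝔽₂ be balanced functions. Define f : 𝔽_{2^k} × 𝔽_{2^k} → 𝔽₂ by f(x,y) = θ(x/y) if y ≠ 0 and f(x,0) = 0, and define g : 𝔽_{2^l} × 𝔽_{2^l} → 𝔽₂ by g(z,τ) = ϑ(z/τ) if τ ≠ 0 and g(z,0) = 0. Let (a,b) ≠ (0,0) in 𝔽_{2^k} × 𝔽_{2^k} and (c,d) ≠ (0,0) in 𝔽_{2^l} × 𝔽_{2^l}, and let H = {(x,y) : Tr(ax + by) = 0} and K = {(z,τ) : Tr(cz + dτ) = 0}, which are 𝔽₂-linear hyperplanes of dimensions n−1 and m−1. Let (α,β) ∈ 𝔽_{2^k} × 𝔽_{2^k} with Tr(aα + bβ) = 1 and (u,v) ∈ 𝔽_{2^l} × 𝔽_{2^l} with Tr(cu + dv) = 1. Then the function h : H × K → 𝔽₂ defined by h(w, w′) = f(w) ⊕ g(w′) ⊕ (f(w) ⊕ f(w + (α,β)))·(g(w′) ⊕ g(w′ + (u,v))) is a bent function on the (n+m−2)-dimensional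 𝔽₂-vector space H × K. -/

import Mathlib

open Finset

/-- The sign `(-1)^b` for `b ∈ 𝔽₂`. -/
def chi (b : ZMod 2) : ℤ := if b = 0 then 1 else -1

/-- The Walsh transform of a Boolean function in `n` variables. -/
def walsh {n : ℕ} (f : (Fin n → ZMod 2) → ZMod 2) (ω : Fin n → ZMod 2) : ℤ :=
  ∑ x : Fin n → ZMod 2, chi (f x + ∑ i, ω i * x i)

/-- The Walsh transform of a Boolean function given on a product `𝔽₂ⁿ × 𝔽₂^m`. -/
def walsh2 {n m : ℕ} (f : (Fin n → ZMod 2) → (Fin m → ZMod 2) → ZMod 2)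
    (α : Fin n → ZMod 2) (β : Fin m → ZMod 2) : ℤ :=
  ∑ x : Fin n → ZMod 2, ∑ y : Fin m → ZMod 2,
    chi (f x y + (∑ i, α i * x i) + (∑ j, β j * y j))

/-- A Boolean function in `n` variables is bent if its Walsh transform only
takes the values `±2^(n/2)`. -/
def IsBent (n : ℕ) (f : (Fin n → ZMod 2) → ZMod 2) : Prop :=
  ∀ a, walsh f a = 2 ^ (n / 2) ∨ walsh f a = -(2 ^ (n / 2))

/-- Bentness for a function given on a product, i.e. as a function in `n + m` variables. -/
def IsBent2 (n m : ℕ) (f : (Fin n → ZMod 2) → (Fin m → ZMod 2) → ZMod 2) : Prop :=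
  ∀ α β, walsh2 f α β = 2 ^ ((n + m) / 2) ∨ walsh2 f α β = -(2 ^ ((n + m) / 2))

/-- `fd` is the dual of a bent function `f`:  `W_f(ω) = 2^(n/2) (−1)^{fd(ω)}`. -/
def IsDual {n : ℕ} (f fd : (Fin n → ZMod 2) → ZMod 2) : Prop :=
  ∀ ω, walsh f ω = 2 ^ (n / 2) * chi (fd ω)

/-- The dual for a bent function given on a product (a function of `n + m` variables). -/
def IsDual2 {n m : ℕ} (f fd : (Fin n → ZMod 2) → (Fin m → ZMod 2) → ZMod 2) : Prop :=
  ∀ α β, walsh2 f α β = 2 ^ ((n + m) / 2) * chi (fd α β)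

/-- Insert the bit `b` at position `μ`, giving a vector of length `n` from one of length `n-1`. -/
def insertAt {n : ℕ} (μ : Fin n) (b : ZMod 2) (x : Fin (n - 1) → ZMod 2) : Fin n → ZMod 2 :=
  fun i =>
    if h : (i : ℕ) < (μ : ℕ) then x ⟨i, by have := μ.isLt; omega⟩
    else if h' : (μ : ℕ) < (i : ℕ) then x ⟨(i : ℕ) - 1, by have := i.isLt; omega⟩
    else b

/-- Hamming weight of a vector in `𝔽₂ⁿ`. -/
def wt {n : ℕ} (ω : Fin n → ZMod 2) : ℕ := (Finset.univ.filter fun i => ω i ≠ 0).card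

/-- `t`-resiliency (with `t : ℤ`, so that the convention that every function is
`(-1)`-resilient holds). -/
def Resilient {n : ℕ} (t : ℤ) (f : (Fin n → ZMod 2) → ZMod 2) : Prop :=
  ∀ ω, (wt ω : ℤ) ≤ t → walsh f ω = 0

/-- `t`-resiliency for a function given on a product `𝔽₂ⁿ × 𝔽₂^m`. -/
def Resilient2 {n m : ℕ} (t : ℤ) (f : (Fin n → ZMod 2) → (Fin m → ZMod 2) → ZMod 2) : Prop :=
  ∀ α β, (wt α + wt β : ℤ) ≤ t → walsh2 f α β = 0


open scoped Classical

lemma chi_add (x y : ZMod 2) : chi (x + y) = chi x * chi y := by revert x y; decide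
lemma chi_add_one (x : ZMod 2) : chi (x + 1) = - chi x := by revert x; decide
lemma chi_cases (b : ZMod 2) : chi b = 1 ∨ chi b = -1 := by revert b; decide
lemma chi_zero : chi 0 = 1 := rfl

lemma chi_key_id (x x' y y' u v : ZMod 2) :
    2 * chi (x + y + (x + x') * (y + y') + (u + v)) =
      chi (x + u) * (chi (y + v) + chi (y' + v)) +
      chi (x' + u) * (chi (y + v) - chi (y' + v)) := by revert x x' y y' u v; decide

lemma sum_chi_balanced {F : Type} [Fintype F] (θ : F → ZMod 2)
    (h0 : (univ.filter fun x => θ x = 0).card = (univ.filter fun x => θ x = 1).card) :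
    ∑ u : F, chi (θ u) = 0 := by
  classical
  rw [← Finset.sum_filter_add_sum_filter_not univ (fun x => θ x = 0)]
  have h1 : ∀ x ∈ univ.filter (fun x => θ x = 0), chi (θ x) = 1 := by
    intro x hx; simp only [mem_filter] at hx; simp [chi, hx.2]
  have h2 : ∀ x ∈ univ.filter (fun x => ¬ θ x = 0), chi (θ x) = -1 := by
    intro x hx; simp only [mem_filter] at hx; simp [chi, hx.2]
  rw [Finset.sum_congr rfl h1, Finset.sum_congr rfl h2]
  have h3 : univ.filter (fun x : F => ¬ θ x = 0) = univ.filter (fun x => θ x = 1) := by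
    ext x
    have : ∀ z : ZMod 2, ¬ z = 0 ↔ z = 1 := by decide
    simp [this]
  rw [h3]
  simp [h0]

lemma sum_chi_linear {F : Type} [AddCommGroup F] [Module (ZMod 2) F] [Fintype F]
    (N : F →ₗ[ZMod 2] ZMod 2) :
    ∑ x : F, chi (N x) = if N = 0 then (Fintype.card F : ℤ) else 0 := by
  classical
  split_ifs with h
  · subst h; simp [chi]
  · obtain ⟨x₀, hx₀⟩ : ∃ x₀, N x₀ ≠ 0 := by
      by_contra hc; push_neg at hc; exact h (by ext x; simp [hc x])
    have h1 : N x₀ = 1 := by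
      have : ∀ z : ZMod 2, z ≠ 0 → z = 1 := by decide
      exact this _ hx₀
    have key : ∑ x : F, chi (N (x + x₀)) = ∑ x : F, chi (N x) :=
      Fintype.sum_equiv (Equiv.addRight x₀) _ _ (fun x => rfl)
    have key2 : ∀ x : F, chi (N (x + x₀)) = - chi (N x) := by
      intro x; rw [map_add, h1, chi_add_one]
    rw [Finset.sum_congr rfl (fun x _ => key2 x), Finset.sum_neg_distrib] at key
    linarith

lemma bent_psap (k : ℕ) (F : Type) [Field F] [Fintype F] [Algebra (ZMod 2) F]
    (hF : Fintype.card F = 2 ^ k) (θ : F → ZMod 2)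
    (hbal : ∑ u : F, chi (θ u) = 0)
    (f : F × F → ZMod 2) (hf : ∀ p, f p = if p.2 = 0 then 0 else θ (p.1 / p.2))
    (M : (F × F) →ₗ[ZMod 2] ZMod 2) :
    ∑ p : F × F, chi (f p + M p) = 2 ^ k ∨ ∑ p : F × F, chi (f p + M p) = -(2 ^ k) := by
  classical
  set M₁ : F →ₗ[ZMod 2] ZMod 2 := M.comp (LinearMap.inl (ZMod 2) F F) with hM₁def
  set M₂ : F →ₗ[ZMod 2] ZMod 2 := M.comp (LinearMap.inr (ZMod 2) F F) with hM₂def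
  have hM : ∀ x y : F, M (x, y) = M₁ x + M₂ y := by
    intro x y
    have h : (x, y) = ((x, 0) : F × F) + (0, y) := by simp
    rw [h, map_add]; rfl
  let φ : F →ₗ[ZMod 2] (F →ₗ[ZMod 2] ZMod 2) :=
    { toFun := fun u => M₁.comp (LinearMap.mulLeft (ZMod 2) u)
      map_add' := fun u u' => by
        ext y; simp [LinearMap.mulLeft_apply, add_mul]
      map_smul' := fun c u => by
        ext y; simp [LinearMap.mulLeft_apply, smul_mul_assoc] }
  have hφ : ∀ u y, φ u y = M₁ (u * y) := fun u y => rfl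
  set c : (F →ₗ[ZMod 2] ZMod 2) → ℤ := fun N => if N = 0 then ((2:ℤ) ^ k) else 0 with hcdef
  have hsum : ∀ N : F →ₗ[ZMod 2] ZMod 2, ∑ y : F, chi (N y) = c N := by
    intro N; rw [sum_chi_linear, hF]; simp [hcdef]
  -- main rewriting
  have split : ∑ p : F × F, chi (f p + M p)
      = ∑ y : F, ∑ x : F, chi (f (x, y) + (M₁ x + M₂ y)) := by
    rw [Fintype.sum_prod_type, Finset.sum_comm]
    exact Finset.sum_congr rfl fun y _ => Finset.sum_congr rfl fun x _ => by rw [hM]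
  have inner0 : ∑ x : F, chi (f (x, (0:F)) + (M₁ x + M₂ 0)) = c M₁ := by
    rw [← hsum]
    refine Finset.sum_congr rfl fun x _ => ?_
    rw [hf]; simp
  have innery : ∀ y : F, y ≠ 0 →
      ∑ x : F, chi (f (x, y) + (M₁ x + M₂ y))
        = ∑ u : F, chi (θ u + (φ u + M₂) y) := by
    intro y hy
    have he : ∀ u : F, (Equiv.mulRight₀ y hy) u = u * y := fun u => rfl
    refine (Fintype.sum_equiv (Equiv.mulRight₀ y hy) _ _ fun u => ?_).symm
    have h1 : f (u * y, y) = θ u := by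
      rw [hf]; simp [hy, mul_div_cancel_right₀ u hy]
    rw [he, h1]
    congr 2
  have erase_sum : ∀ u : F,
      ∑ y ∈ univ.erase (0:F), chi (θ u + (φ u + M₂) y) = chi (θ u) * (c (φ u + M₂) - 1) := by
    intro u
    have h1 : ∑ y ∈ univ.erase (0:F), chi (θ u + (φ u + M₂) y)
        = ∑ y ∈ univ.erase (0:F), chi (θ u) * chi ((φ u + M₂) y) := by
      exact Finset.sum_congr rfl fun y _ => chi_add _ _
    rw [h1, ← Finset.mul_sum]
    congr 1
    have h2 : ∑ y ∈ univ.erase (0:F), chi ((φ u + M₂) y)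
        = (∑ y : F, chi ((φ u + M₂) y)) - chi ((φ u + M₂) 0) := by
      rw [← Finset.sum_erase_add univ _ (mem_univ (0:F))]; ring
    rw [h2, hsum, map_zero]; rfl
  have total : ∑ p : F × F, chi (f p + M p)
      = (∑ u : F, chi (θ u) * c (φ u + M₂)) + c M₁ := by
    rw [split, ← Finset.sum_erase_add univ _ (mem_univ (0:F)), inner0]
    congr 1
    rw [Finset.sum_congr rfl (fun y hy => innery y (Finset.ne_of_mem_erase hy)),
        Finset.sum_comm]
    rw [Finset.sum_congr rfl (fun u _ => erase_sum u)]
    have : ∑ u : F, chi (θ u) * (c (φ u + M₂) - 1)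
        = (∑ u : F, chi (θ u) * c (φ u + M₂)) - ∑ u : F, chi (θ u) := by
      rw [← Finset.sum_sub_distrib]
      exact Finset.sum_congr rfl fun u _ => by ring
    rw [this, hbal, sub_zero]
  by_cases hM1 : M₁ = 0
  · left
    have hφ0 : ∀ u : F, φ u = 0 := by
      intro u; ext y; rw [hφ, hM1]; rfl
    have : ∑ u : F, chi (θ u) * c (φ u + M₂) = 0 := by
      have h1 : ∀ u : F, c (φ u + M₂) = c M₂ := fun u => by rw [hφ0, zero_add]
      rw [Finset.sum_congr rfl fun u _ => by rw [h1], ← Finset.sum_mul, hbal, zero_mul]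
    rw [total, this, zero_add, hcdef]; simp [hM1]
  · -- M₁ ≠ 0 : unique u₀ with φ u₀ + M₂ = 0
    have hinj : Function.Injective φ := by
      rw [injective_iff_map_eq_zero]
      intro u hu
      by_contra hu0
      apply hM1
      ext x
      have := congrArg (fun g : F →ₗ[ZMod 2] ZMod 2 => g (u⁻¹ * x)) hu
      simp only [hφ] at this
      rw [← mul_assoc, mul_inv_cancel₀ hu0, one_mul] at this
      simpa using this
    have hfd : FiniteDimensional (ZMod 2) F := inferInstance
    have hsurj : Function.Surjective φ :=
      (LinearMap.injective_iff_surjective_of_finrank_eq_finrank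
        Subspace.dual_finrank_eq.symm).mp hinj
    obtain ⟨u₀, hu₀⟩ := hsurj (-M₂)
    have hN0 : φ u₀ + M₂ = 0 := by rw [hu₀, neg_add_cancel]
    have huniq : ∀ u : F, φ u + M₂ = 0 → u = u₀ := by
      intro u hu
      apply hinj
      have : φ u = -M₂ := by rwa [add_eq_zero_iff_eq_neg] at hu
      rw [this, hu₀]
    have hfilter : univ.filter (fun u : F => φ u + M₂ = 0) = {u₀} := by
      ext u
      simp only [mem_filter, mem_univ, true_and, mem_singleton]
      exact ⟨huniq u, fun h => h ▸ hN0⟩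
    have hsum2 : ∑ u : F, chi (θ u) * c (φ u + M₂) = chi (θ u₀) * 2 ^ k := by
      have h1 : ∑ u : F, chi (θ u) * c (φ u + M₂)
          = ∑ u ∈ univ.filter (fun u : F => φ u + M₂ = 0), chi (θ u) * 2 ^ k := by
        rw [Finset.sum_filter]
        refine Finset.sum_congr rfl fun u _ => ?_
        by_cases h : φ u + M₂ = 0 <;> simp [hcdef, h]
      rw [h1, hfilter, Finset.sum_singleton]
    rw [total, hsum2, hcdef]
    simp only [hM1, if_false, add_zero]
    rcases chi_cases (θ u₀) with h | h <;> rw [h] <;> [left; right] <;> ring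

lemma key_dichotomy (k : ℕ) (F : Type) [Field F] [Fintype F] [Algebra (ZMod 2) F]
    (hF : Fintype.card F = 2 ^ k) (θ : F → ZMod 2)
    (hbal : ∑ u : F, chi (θ u) = 0)
    (f : F × F → ZMod 2) (hf : ∀ p, f p = if p.2 = 0 then 0 else θ (p.1 / p.2))
    (a b : F)
    (H : Submodule (ZMod 2) (F × F))
    (hH : ∀ p : F × F, p ∈ H ↔ Algebra.trace (ZMod 2) F (a * p.1 + b * p.2) = 0)
    (α β : F) (hαβ : Algebra.trace (ZMod 2) F (a * α + b * β) = 1)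
    (ℓ : H →ₗ[ZMod 2] ZMod 2) :
    ∃ e : ℤ, (e = 2 ^ k ∨ e = -(2 ^ k)) ∧
      ((∑ w : H, chi (f (w : F × F) + ℓ w) = e ∧
        ∑ w : H, chi (f ((w : F × F) + (α, β)) + ℓ w) = 0) ∨
       (∑ w : H, chi (f (w : F × F) + ℓ w) = 0 ∧
        ∑ w : H, chi (f ((w : F × F) + (α, β)) + ℓ w) = e)) := by
  classical
  -- the trace functional
  set T : (F × F) →ₗ[ZMod 2] ZMod 2 :=
    (Algebra.trace (ZMod 2) F).comp
      ((LinearMap.mulLeft (ZMod 2) a).comp (LinearMap.fst (ZMod 2) F F)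
        + (LinearMap.mulLeft (ZMod 2) b).comp (LinearMap.snd (ZMod 2) F F)) with hTdef
  have hT : ∀ p : F × F, T p = Algebra.trace (ZMod 2) F (a * p.1 + b * p.2) := fun p => rfl
  -- extension of ℓ
  obtain ⟨H', hcompl⟩ := Submodule.exists_isCompl H
  set ℓe : (F × F) →ₗ[ZMod 2] ZMod 2 := ℓ.comp (H.projectionOnto H' hcompl) with hle
  have hext : ∀ w : H, ℓe (w : F × F) = ℓ w := by
    intro w
    rw [hle, LinearMap.comp_apply, Submodule.projectionOnto_apply_left]
  -- characteristic two
  have char2 : ∀ p : F × F, p + p = 0 := by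
    intro p
    have h2 : ((2 : ZMod 2)) = 0 := rfl
    calc p + p = (2 : ZMod 2) • p := (two_smul _ p).symm
    _ = 0 := by rw [h2, zero_smul]
  -- subtype sums as indicator sums
  have hsub : ∀ G : F × F → ℤ, ∑ w : H, G (w : F × F) = ∑ p : F × F, if p ∈ H then G p else 0 := by
    intro G
    rw [← Finset.sum_filter]
    exact (Finset.sum_subtype _ (by simp) G).symm
  set W : ((F × F) →ₗ[ZMod 2] ZMod 2) → ℤ := fun M => ∑ p : F × F, chi (f p + M p) with hWdef
  have hW : ∀ M, W M = 2 ^ k ∨ W M = -(2 ^ k) := fun M =>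
    bent_psap k F hF θ hbal f hf M
  set c₀ : F × F := (α, β) with hc₀
  have hTc₀ : T c₀ = 1 := by rw [hT]; exact hαβ
  set S : ℤ := ∑ w : H, chi (f (w : F × F) + ℓ w) with hSdef
  set S' : ℤ := ∑ w : H, chi (f ((w : F × F) + c₀) + ℓ w) with hS'def
  -- rewrite with the extension
  have hS1 : S = ∑ p : F × F, if p ∈ H then chi (f p + ℓe p) else 0 := by
    rw [hSdef]
    exact (Finset.sum_congr rfl fun w _ => by rw [hext w]).trans
      (hsub fun p => chi (f p + ℓe p))
  have hS'1 : S' = ∑ p : F × F, if p ∈ H then chi (f (p + c₀) + ℓe p) else 0 := by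
    rw [hS'def]
    exact (Finset.sum_congr rfl fun w _ => by rw [hext w]).trans
      (hsub fun p => chi (f (p + c₀) + ℓe p))
  -- 2S = W ℓe + W (ℓe + T)
  have hS2 : 2 * S = W ℓe + W (ℓe + T) := by
    rw [hS1, Finset.mul_sum, hWdef]
    rw [← Finset.sum_add_distrib]
    refine Finset.sum_congr rfl fun p _ => ?_
    by_cases hp : p ∈ H
    · have hTp : T p = 0 := by rw [hT]; exact (hH p).mp hp
      rw [if_pos hp, LinearMap.add_apply, hTp, add_zero]
      ring
    · have hTp : T p = 1 := by
        have h1 : T p ≠ 0 := fun h => hp ((hH p).mpr (by rw [← hT]; exact h))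
        have : ∀ z : ZMod 2, z ≠ 0 → z = 1 := by decide
        exact this _ h1
      rw [if_neg hp, LinearMap.add_apply, hTp, ← add_assoc, chi_add_one]
      ring
  -- 2S' = chi (ℓe c₀) * (W ℓe - W (ℓe + T))
  have hS'2 : 2 * S' = chi (ℓe c₀) * (W ℓe - W (ℓe + T)) := by
    have reindex : ∑ p : F × F, (if p ∈ H then chi (f (p + c₀) + ℓe p) else 0)
        = ∑ q : F × F, (if q + c₀ ∈ H then chi (f q + ℓe (q + c₀)) else 0) := by
      refine Fintype.sum_equiv (Equiv.addRight c₀) _ _ fun p => ?_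
      have he : (Equiv.addRight c₀) p = p + c₀ := rfl
      rw [he]
      have hcancel : p + c₀ + c₀ = p := by
        rw [add_assoc, char2, add_zero]
      rw [hcancel]
    rw [hS'1, reindex, Finset.mul_sum, hWdef, ← Finset.sum_sub_distrib, Finset.mul_sum]
    refine Finset.sum_congr rfl fun q _ => ?_
    have hiff : (q + c₀ ∈ H) ↔ T q = 1 := by
      rw [hH, ← hT, map_add, hTc₀]
      have : ∀ z : ZMod 2, z + 1 = 0 ↔ z = 1 := by decide
      exact this _
    have hz : T q = 0 ∨ T q = 1 := by
      have : ∀ z : ZMod 2, z = 0 ∨ z = 1 := by decide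
      exact this _
    rcases hz with hz | hz
    · have hnot : ¬ (q + c₀ ∈ H) := by rw [hiff, hz]; exact fun h => by simp at h
      rw [if_neg hnot, LinearMap.add_apply, hz, add_zero]
      ring
    · have hyes : q + c₀ ∈ H := hiff.mpr hz
      rw [if_pos hyes, map_add, LinearMap.add_apply, hz]
      simp only [← add_assoc]
      rw [chi_add_one, chi_add (f q + ℓe q) (ℓe c₀)]
      ring
  -- conclude
  rcases hW ℓe with h1 | h1 <;> rcases hW (ℓe + T) with h2 | h2
  · exact ⟨2 ^ k, Or.inl rfl, Or.inl ⟨by rw [h1, h2] at hS2; linarith,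
      by rw [h1, h2] at hS'2; simp at hS'2; linarith⟩⟩
  · rcases chi_cases (ℓe c₀) with hc | hc
    · exact ⟨2 ^ k, Or.inl rfl, Or.inr ⟨by rw [h1, h2] at hS2; linarith,
        by rw [h1, h2, hc] at hS'2; linarith⟩⟩
    · exact ⟨-(2 ^ k), Or.inr rfl, Or.inr ⟨by rw [h1, h2] at hS2; linarith,
        by rw [h1, h2, hc] at hS'2; linarith⟩⟩
  · rcases chi_cases (ℓe c₀) with hc | hc
    · exact ⟨-(2 ^ k), Or.inr rfl, Or.inr ⟨by rw [h1, h2] at hS2; linarith,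
        by rw [h1, h2, hc] at hS'2; linarith⟩⟩
    · exact ⟨2 ^ k, Or.inl rfl, Or.inr ⟨by rw [h1, h2] at hS2; linarith,
        by rw [h1, h2, hc] at hS'2; linarith⟩⟩
  · exact ⟨-(2 ^ k), Or.inr rfl, Or.inl ⟨by rw [h1, h2] at hS2; linarith,
      by rw [h1, h2] at hS'2; simp at hS'2; linarith⟩⟩


open scoped Classical in
/-- the modified indirect sum of two `PS_{ap}` bent functions, restricted to
linear hyperplanes `H` and `K`, is bent on the `(n+m-2)`-dimensional space `H × K`
(here `n = 2k`, `m = 2l`, and `F`, `G` are the fields with `2^k` and `2^l` elements). -/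
theorem bent_PSap_indirect_sum (k l : ℕ) (hk : 0 < k) (hl : 0 < l)
    (F : Type) [Field F] [Fintype F] [Algebra (ZMod 2) F] (hF : Fintype.card F = 2 ^ k)
    (G : Type) [Field G] [Fintype G] [Algebra (ZMod 2) G] (hG : Fintype.card G = 2 ^ l)
    (θ : F → ZMod 2) (ϑ : G → ZMod 2)
    (hθ : (Finset.univ.filter fun x => θ x = 0).card = 2 ^ (k - 1) ∧
          (Finset.univ.filter fun x => θ x = 1).card = 2 ^ (k - 1))
    (hϑ : (Finset.univ.filter fun z => ϑ z = 0).card = 2 ^ (l - 1) ∧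
          (Finset.univ.filter fun z => ϑ z = 1).card = 2 ^ (l - 1))
    (f : F × F → ZMod 2) (hf : ∀ p, f p = if p.2 = 0 then 0 else θ (p.1 / p.2))
    (g : G × G → ZMod 2) (hg : ∀ p, g p = if p.2 = 0 then 0 else ϑ (p.1 / p.2))
    (a b : F) (hab : (a, b) ≠ (0, 0)) (c d : G) (hcd : (c, d) ≠ (0, 0))
    (H : Submodule (ZMod 2) (F × F))
    (hH : ∀ p : F × F, p ∈ H ↔ Algebra.trace (ZMod 2) F (a * p.1 + b * p.2) = 0)
    (K : Submodule (ZMod 2) (G × G))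
    (hK : ∀ p : G × G, p ∈ K ↔ Algebra.trace (ZMod 2) G (c * p.1 + d * p.2) = 0)
    (α β : F) (hαβ : Algebra.trace (ZMod 2) F (a * α + b * β) = 1)
    (uu vv : G) (huv : Algebra.trace (ZMod 2) G (c * uu + d * vv) = 1)
    (h : H × K → ZMod 2)
    (hh : ∀ w : H × K,
      h w = f (w.1 : F × F) + g (w.2 : G × G) +
        (f (w.1 : F × F) + f ((w.1 : F × F) + (α, β))) *
          (g (w.2 : G × G) + g ((w.2 : G × G) + (uu, vv)))) :
    ∀ L : (H × K) →ₗ[ZMod 2] ZMod 2,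
      (∑ w : H × K, chi (h w + L w)) = 2 ^ (k + l - 1) ∨
      (∑ w : H × K, chi (h w + L w)) = -(2 ^ (k + l - 1)) := by
  
  intro L
  have hbalF : ∑ u : F, chi (θ u) = 0 := sum_chi_balanced θ (hθ.1.trans hθ.2.symm)
  have hbalG : ∑ u : G, chi (ϑ u) = 0 := sum_chi_balanced ϑ (hϑ.1.trans hϑ.2.symm)
  set L₁ : H →ₗ[ZMod 2] ZMod 2 := L.comp (LinearMap.inl (ZMod 2) H K) with hL₁
  set L₂ : K →ₗ[ZMod 2] ZMod 2 := L.comp (LinearMap.inr (ZMod 2) H K) with hL₂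
  have hL : ∀ (w₁ : H) (w₂ : K), L (w₁, w₂) = L₁ w₁ + L₂ w₂ := by
    intro w₁ w₂
    have he : ((w₁, w₂) : H × K) = (w₁, 0) + (0, w₂) := by simp
    rw [he, map_add]; rfl
  set SA : ℤ := ∑ w : H, chi (f (w : F × F) + L₁ w) with hSA
  set SA' : ℤ := ∑ w : H, chi (f ((w : F × F) + (α, β)) + L₁ w) with hSA'
  set SB : ℤ := ∑ w : K, chi (g (w : G × G) + L₂ w) with hSB
  set SB' : ℤ := ∑ w : K, chi (g ((w : G × G) + (uu, vv)) + L₂ w) with hSB'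
  have h2T : 2 * ∑ w : H × K, chi (h w + L w) = SA * (SB + SB') + SA' * (SB - SB') := by
    calc 2 * ∑ w : H × K, chi (h w + L w)
        = ∑ w₁ : H, ∑ w₂ : K, 2 * chi (h (w₁, w₂) + L (w₁, w₂)) := by
          rw [Fintype.sum_prod_type, Finset.mul_sum]
          exact Finset.sum_congr rfl fun w₁ _ => Finset.mul_sum _ _ _
      _ = ∑ w₁ : H, ∑ w₂ : K,
            (chi (f (w₁ : F × F) + L₁ w₁) *
              (chi (g (w₂ : G × G) + L₂ w₂) + chi (g ((w₂ : G × G) + (uu, vv)) + L₂ w₂)) +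
             chi (f ((w₁ : F × F) + (α, β)) + L₁ w₁) *
              (chi (g (w₂ : G × G) + L₂ w₂) - chi (g ((w₂ : G × G) + (uu, vv)) + L₂ w₂))) := by
          refine Finset.sum_congr rfl fun w₁ _ => Finset.sum_congr rfl fun w₂ _ => ?_
          rw [hh (w₁, w₂), hL w₁ w₂]
          exact chi_key_id _ _ _ _ _ _
      _ = ∑ w₁ : H,
            (chi (f (w₁ : F × F) + L₁ w₁) * (SB + SB') +
             chi (f ((w₁ : F × F) + (α, β)) + L₁ w₁) * (SB - SB')) := by
          refine Finset.sum_congr rfl fun w₁ _ => ?_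
          rw [Finset.sum_add_distrib, ← Finset.mul_sum, ← Finset.mul_sum,
            Finset.sum_add_distrib, Finset.sum_sub_distrib]
      _ = SA * (SB + SB') + SA' * (SB - SB') := by
          rw [Finset.sum_add_distrib, ← Finset.sum_mul, ← Finset.sum_mul]
  obtain ⟨ef, hef, hcaseF⟩ := key_dichotomy k F hF θ hbalF f hf a b H hH α β hαβ L₁
  obtain ⟨eg, heg, hcaseG⟩ := key_dichotomy l G hG ϑ hbalG g hg c d K hK uu vv huv L₂
  have hpow : (2 : ℤ) ^ (k + l) = 2 * 2 ^ (k + l - 1) := by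
    have he : k + l - 1 + 1 = k + l := by omega
    calc (2 : ℤ) ^ (k + l) = 2 ^ (k + l - 1 + 1) := by rw [he]
      _ = 2 * 2 ^ (k + l - 1) := by rw [pow_succ]; ring
  have hprod : ef * eg = 2 ^ (k + l) ∨ ef * eg = -(2 ^ (k + l)) := by
    have hm : (2 : ℤ) ^ k * 2 ^ l = 2 ^ (k + l) := (pow_add 2 k l).symm
    rcases hef with h1 | h1 <;> rcases heg with h2 | h2 <;> rw [h1, h2]
    · exact Or.inl hm
    · exact Or.inr (by rw [mul_neg, hm])
    · exact Or.inr (by rw [neg_mul, hm])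
    · exact Or.inl (by rw [neg_mul_neg, hm])
  have h2T' : 2 * ∑ w : H × K, chi (h w + L w) = ef * eg ∨
      2 * ∑ w : H × K, chi (h w + L w) = -(ef * eg) := by
    rcases hcaseF with ⟨hA, hA'⟩ | ⟨hA, hA'⟩ <;> rcases hcaseG with ⟨hB, hB'⟩ | ⟨hB, hB'⟩ <;>
      rw [h2T, hSA, hSA', hSB, hSB', hA, hA', hB, hB']
    · exact Or.inl (by ring)
    · exact Or.inl (by ring)
    · exact Or.inl (by ring)
    · exact Or.inr (by ring)
  rcases h2T' with ht | ht <;> rcases hprod with hp | hp <;> rw [hp] at ht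
  · exact Or.inl (by linarith)
  · exact Or.inr (by linarith)
  · exact Or.inr (by linarith)
  · exact Or.inl (by linarith)
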